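/- The cocycle identity \phi_1([d^1_m, d^1_n], d_r) + \phi_1([d^1_n, d_r], d^1_m) + \phi_1([d_r, d^1_m], d^1_n) = 0 holds for all integers m, n, r, using the brackets [d^1_m,d^1_n]=(n-m)d_{m+n-1}, [d^1_n,d_r] = -[d_r,d^1_n] = -((n-r-1)d^1_{r+n+1} + (4n-4r-2)d^1_{r+n}) and the given formulas for \phi_1. -/
import Mathlib


/-- `φ₁(d_k, d_l) = l(l+1)(l+2)δ_{k+l,-2} + 4l(2l+1)(l+1)δ_{k+l,-1}
    + 4l(2l-1)(2l+1)δ_{k+l,0}`. -/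
noncomputable def phidd (k l : ℤ) : ℂ :=
  (if k + l = -2 then (l : ℂ) * (l + 1) * (l + 2) else 0) +
    (if k + l = -1 then 4 * (l : ℂ) * (2 * l + 1) * (l + 1) else 0) +
      (if k + l = 0 then 4 * (l : ℂ) * (2 * l - 1) * (2 * l + 1) else 0)

/-- `φ₁(d¹_k, d¹_l) = 2(l²-l)(2l-1)δ_{k+l,1} + (l³-l)δ_{k+l,0}`. -/
noncomputable def phi11 (k l : ℤ) : ℂ :=
  (if k + l = 1 then 2 * ((l : ℂ) ^ 2 - l) * (2 * l - 1) else 0) +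
    (if k + l = 0 then (l : ℂ) ^ 3 - l else 0)

/-- the cocycle identity
`φ₁([d¹_m,d¹_n],d_r) + φ₁([d¹_n,d_r],d¹_m) + φ₁([d_r,d¹_m],d¹_n) = 0`,
expanded via the brackets `[d¹_m,d¹_n] = (n-m)d_{m+n-1}` and
`[d¹_n,d_r] = -[d_r,d¹_n] = -((n-r-1)d¹_{r+n+1} + (4n-4r-2)d¹_{r+n})`. -/
theorem phi1_cocycle_d1_d1_d (m n r : ℤ) :
    ((n : ℂ) - m) * phidd (m + n - 1) r
      - (((n : ℂ) - r - 1) * phi11 (r + n + 1) m +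
          (4 * (n : ℂ) - 4 * r - 2) * phi11 (r + n) m)
      + (((m : ℂ) - r - 1) * phi11 (r + m + 1) n +
          (4 * (m : ℂ) - 4 * r - 2) * phi11 (r + m) n) = 0 := by
  obtain ⟨s, rfl⟩ : ∃ s, r = s - m - n := ⟨m + n + r, by ring⟩
  simp only [phidd, phi11]
  by_cases h1 : s = -1
  · subst h1
    rw [
        if_pos (by omega),
        if_neg (by omega),
        if_neg (by omega),
        if_neg (by omega),
        if_pos (by omega),
        if_neg (by omega),
        if_neg (by omega),
        if_neg (by omega),
        if_pos (by omega),
        if_neg (by omega),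
        if_neg (by omega)]
    push_cast
    ring
  · by_cases h0 : s = 0
    · subst h0
      rw [
          if_neg (by omega),
          if_pos (by omega),
          if_neg (by omega),
          if_pos (by omega),
          if_neg (by omega),
          if_neg (by omega),
          if_pos (by omega),
          if_pos (by omega),
          if_neg (by omega),
          if_neg (by omega),
          if_pos (by omega)]
      push_cast
      ring
    · by_cases h2 : s = 1
      · subst h2
        rw [
            if_neg (by omega),
            if_neg (by omega),
            if_pos (by omega),
            if_neg (by omega),
            if_neg (by omega),
            if_pos (by omega),
            if_neg (by omega),
            if_neg (by omega),
            if_neg (by omega),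
            if_pos (by omega),
            if_neg (by omega)]
        push_cast
        ring
      · rw [
            if_neg (by omega),
            if_neg (by omega),
            if_neg (by omega),
            if_neg (by omega),
            if_neg (by omega),
            if_neg (by omega),
            if_neg (by omega),
            if_neg (by omega),
            if_neg (by omega),
            if_neg (by omega),
            if_neg (by omega)]
        push_cast
        ring
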